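/- For every irrational real r with a continued fraction expansion r = n₀ + 1/(n₁ + 1/(n₂ + ⋯)) (n₀ ≥ 0, n_i ≥ 1 for i ≥ 1), the sequence a(N_m) converges to r, where N_m = Σ_{k=0}^{m} 2^{n₀+n₁+⋯+n_k} is the truncation of the associated 2-adic index. -/

import Mathlib

/-- Value of the finite continued fraction x₀ + 1/(x₁ + 1/(⋯ + 1/x_k⋯)) over ℝ. -/
noncomputable def cfR : List ℕ → ℝ
  | [] => 0
  | [x] => (x : ℝ)
  | x :: l => (x : ℝ) + 1 / cfR l

noncomputable def gR : List ℕ → ℝ → ℝ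
  | [], x => x
  | h :: t, x => (h : ℝ) + 1 / gR t x

def gQ : List ℕ → ℚ → ℚ
  | [], x => x
  | h :: t, x => (h : ℚ) + 1 / gQ t x

lemma gQ_cast (l : List ℕ) (x : ℚ) : ((gQ l x : ℚ) : ℝ) = gR l (x : ℝ) := by
  induction l with
  | nil => rfl
  | cons h t ih =>
    show ((((h:ℚ) + 1 / gQ t x : ℚ)) : ℝ) = (h:ℝ) + 1 / gR t x
    push_cast [ih]
    ring_nf

lemma cfR_cons₂ (x y : ℕ) (l : List ℕ) : cfR (x :: y :: l) = (x:ℝ) + 1 / cfR (y :: l) := rfl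

lemma cfR_append (l : List ℕ) (k : ℕ) : cfR (l ++ [k]) = gR l (k : ℝ) := by
  induction l with
  | nil => rfl
  | cons h t ih =>
    cases t with
    | nil => simp [cfR_cons₂, gR, cfR]
    | cons y u =>
      rw [show (h :: y :: u) ++ [k] = h :: y :: (u ++ [k]) from rfl, cfR_cons₂,
        show y :: (u ++ [k]) = (y :: u) ++ [k] from rfl, ih]
      rfl

lemma gR_append (l : List ℕ) (k : ℕ) (x : ℝ) : gR (l ++ [k]) x = gR l ((k:ℝ) + 1 / x) := by
  induction l with
  | nil => rfl
  | cons h t ih => simp [gR, ih]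

lemma gR_ge_one (t : List ℕ) (ht : ∀ k ∈ t, 1 ≤ k) (x : ℝ) (hx : 1 ≤ x) : 1 ≤ gR t x := by
  induction t with
  | nil => exact hx
  | cons h u ih =>
    have h1 : (1:ℝ) ≤ gR u x := ih (fun k hk => ht k (List.mem_cons_of_mem _ hk))
    have h2 : (1:ℝ) ≤ (h:ℝ) := by exact_mod_cast ht h List.mem_cons_self
    have : 0 < 1 / gR u x := by positivity
    unfold gR; linarith

def Btww (a b c : ℝ) : Prop := (a ≤ b ∧ b ≤ c) ∨ (c ≤ b ∧ b ≤ a)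

lemma btw_step (h : ℕ) {u v w : ℝ} (hu : 0 < u) (hv : 0 < v) (hw : 0 < w) (H : Btww u v w) :
    Btww ((h:ℝ) + 1/u) ((h:ℝ) + 1/v) ((h:ℝ) + 1/w) := by
  rcases H with ⟨h1, h2⟩ | ⟨h1, h2⟩
  · right
    constructor
    · have := one_div_le_one_div_of_le hv h2; linarith
    · have := one_div_le_one_div_of_le hu h1; linarith
  · left
    constructor
    · have := one_div_le_one_div_of_le hv h2; linarith
    · have := one_div_le_one_div_of_le hw h1; linarith

lemma gR_btw (t : List ℕ) (ht : ∀ k ∈ t, 1 ≤ k) {x y z : ℝ} (hx : 1 ≤ x) (hxy : x ≤ y)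
    (hyz : y ≤ z) : Btww (gR t x) (gR t y) (gR t z) := by
  induction t with
  | nil => exact Or.inl ⟨hxy, hyz⟩
  | cons h u ih =>
    have hu' : ∀ k ∈ u, 1 ≤ k := fun k hk => ht k (List.mem_cons_of_mem _ hk)
    have p1 : (0:ℝ) < gR u x := lt_of_lt_of_le one_pos (gR_ge_one u hu' x hx)
    have p2 : (0:ℝ) < gR u y := lt_of_lt_of_le one_pos (gR_ge_one u hu' y (hx.trans hxy))
    have p3 : (0:ℝ) < gR u z := lt_of_lt_of_le one_pos (gR_ge_one u hu' z ((hx.trans hxy).trans hyz))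
    exact btw_step h p1 p2 p3 (ih hu')

def DD (n : ℕ → ℕ) (m : ℕ) : ℕ → ℕ
  | 0 => 1
  | j + 1 => 2 ^ (n (m - j)) * DD n m j + 1

lemma DD_ge_one (n : ℕ → ℕ) (m j : ℕ) : 1 ≤ DD n m j := by
  cases j with
  | zero => exact le_refl 1
  | succ j => unfold DD; omega

lemma a_pow (a : ℕ → ℚ) (h2 : ∀ n : ℕ, 1 ≤ n → a (2 * n) = a n + 1) :
    ∀ (i M : ℕ), 1 ≤ M → a (2 ^ i * M) = a M + i := by
  intro i
  induction i with
  | zero => intro M hM; simp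
  | succ i ih =>
    intro M hM
    have e : 2 ^ (i+1) * M = 2 * (2 ^ i * M) := by ring
    have hM' : 1 ≤ 2 ^ i * M := Nat.mul_pos (pow_pos (by norm_num) i) hM
    rw [e, h2 _ hM', ih M hM]
    push_cast; ring

lemma a_key (a : ℕ → ℚ) (h1 : a 1 = 1)
    (h2 : ∀ n : ℕ, 1 ≤ n → a (2 * n) = a n + 1)
    (h3 : ∀ n : ℕ, 1 ≤ n → a (2 * n + 1) = 1 / a (2 * n))
    (n : ℕ → ℕ) (hn : ∀ i : ℕ, 1 ≤ i → 1 ≤ n i) (m : ℕ) :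
    ∀ j, j ≤ m → a (DD n m j) + (n (m - j) : ℚ) = gQ ((List.range' (m - j) (j + 1)).map n) 1 := by
  intro j
  induction j with
  | zero =>
    intro _
    simp [DD, h1, gQ]
    ring
  | succ j ih =>
    intro hjm
    have hj : j ≤ m := by omega
    have hmj : 1 ≤ m - j := by omega
    set e := n (m - j) with he
    have he1 : 1 ≤ e := hn _ hmj
    have hD : 1 ≤ DD n m j := DD_ge_one n m j
    have hsplit : DD n m (j+1) = 2 * (2 ^ (e-1) * DD n m j) + 1 := by
      show 2 ^ e * DD n m j + 1 = _
      have : 2 ^ e = 2 * 2 ^ (e - 1) := by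
        rw [← pow_succ']
        congr 1
        omega
      rw [this]; ring
    have hM : 1 ≤ 2 ^ (e-1) * DD n m j := Nat.mul_pos (pow_pos (by norm_num) (e-1)) hD
    have step : a (DD n m (j+1)) = 1 / (a (DD n m j) + (e : ℚ)) := by
      rw [hsplit, h3 _ hM, h2 _ hM, a_pow a h2 _ _ hD]
      congr 1
      have : ((e - 1 : ℕ) : ℚ) + 1 = (e : ℚ) := by
        have : (e - 1) + 1 = e := by omega
        exact_mod_cast congrArg (Nat.cast : ℕ → ℚ) this
      linarith
    have hrng : List.range' (m - (j+1)) (j + 2) = (m - (j+1)) :: List.range' (m - j) (j + 1) := by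
      rw [List.range'_succ]
      have hh : m - (j+1) + 1 = m - j := by omega
      rw [hh]
    rw [hrng, List.map_cons]
    show a (DD n m (j+1)) + (n (m - (j+1)) : ℚ) = (n (m - (j+1)) : ℚ) + 1 / gQ ((List.range' (m - j) (j+1)).map n) 1
    rw [← ih hj, step]
    ring

lemma N_eq (n : ℕ → ℕ) (m : ℕ) :
    ∑ k ∈ Finset.range (m + 1), 2 ^ (∑ i ∈ Finset.range (k + 1), n i)
      = 2 ^ (n 0) * DD n m m := by
  set S : ℕ → ℕ := fun k => ∑ i ∈ Finset.range (k + 1), n i with hS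
  have key : ∀ j, j ≤ m → 2 ^ (S (m - j)) * DD n m j = ∑ i ∈ Finset.range (j + 1), 2 ^ (S (m - i)) := by
    intro j
    induction j with
    | zero => simp [DD]
    | succ j ih =>
      intro hjm
      have hj : j ≤ m := by omega
      have hSs : S (m - j) = S (m - (j+1)) + n (m - j) := by
        have h1 : m - j = (m - (j+1)) + 1 := by omega
        rw [h1, hS]
        simp [Finset.sum_range_succ]
      rw [Finset.sum_range_succ, ← ih hj]
      show 2 ^ S (m - (j+1)) * (2 ^ (n (m - j)) * DD n m j + 1) = _
      rw [hSs, pow_add]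
      ring
  have hrefl : ∑ k ∈ Finset.range (m + 1), 2 ^ (S k) = ∑ i ∈ Finset.range (m + 1), 2 ^ (S (m - i)) := by
    have := Finset.sum_range_reflect (fun k => 2 ^ (S k)) (m + 1)
    rw [← this]
    apply Finset.sum_congr rfl
    intro i hi
    norm_num
  rw [hrefl, ← key m le_rfl, Nat.sub_self]
  have h0 : S 0 = n 0 := by simp [hS]
  rw [h0]

theorem stmt19 (a : ℕ → ℚ) (h1 : a 1 = 1)
    (h2 : ∀ n : ℕ, 1 ≤ n → a (2 * n) = a n + 1)
    (h3 : ∀ n : ℕ, 1 ≤ n → a (2 * n + 1) = 1 / a (2 * n))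
    (n : ℕ → ℕ) (hn : ∀ i : ℕ, 1 ≤ i → 1 ≤ n i)
    (r : ℝ) (hr : Irrational r)
    (hconv : Filter.Tendsto (fun m : ℕ => cfR ((List.range (m + 1)).map n))
      Filter.atTop (nhds r))
    (N : ℕ → ℕ)
    (hN : ∀ m : ℕ, N m = ∑ k ∈ Finset.range (m + 1), 2 ^ (∑ i ∈ Finset.range (k + 1), n i)) :
    Filter.Tendsto (fun m : ℕ => ((a (N m) : ℚ) : ℝ)) Filter.atTop (nhds r) := by
  set L : ℕ → List ℕ := fun m => (List.range (m + 1)).map n with hL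
  set c : ℕ → ℝ := fun m => cfR (L m) with hc
  -- a (N m) = gR (L m) 1
  have hval : ∀ m, ((a (N m) : ℚ) : ℝ) = gR (L m) 1 := by
    intro m
    have h0 : a (N m) = gQ (L m) 1 := by
      rw [hN m, N_eq n m, a_pow a h2 _ _ (DD_ge_one n m m)]
      have := a_key a h1 h2 h3 n hn m m le_rfl
      simp only [Nat.sub_self] at this
      rw [this, hL]
      congr 2
      exact List.range_eq_range'.symm
    rw [h0, gQ_cast]
    norm_num
  -- the squeeze bounds
  have hLsplit : ∀ m, L (m+1) = L m ++ [n (m+1)] := by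
    intro m
    rw [hL]
    simp [List.range_succ]
  have hbound : ∀ k : ℕ, min (c (k+1)) (c (k+3)) ≤ gR (L (k+2)) 1 ∧
      gR (L (k+2)) 1 ≤ max (c (k+1)) (c (k+3)) := by
    intro k
    have hx1 : (1:ℝ) ≤ (n (k+1) : ℝ) := by exact_mod_cast hn (k+1) (by omega)
    have hp2 : (0:ℝ) < (n (k+2) : ℝ) := by
      have : (1:ℝ) ≤ (n (k+2) : ℝ) := by exact_mod_cast hn (k+2) (by omega)
      linarith
    have hp3 : (1:ℝ) ≤ (n (k+3) : ℝ) := by exact_mod_cast hn (k+3) (by omega)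
    set x : ℝ := (n (k+1) : ℝ) with hxdef
    set y : ℝ := (n (k+1) : ℝ) + 1 / ((n (k+2) : ℝ) + 1) with hydef
    set z : ℝ := (n (k+1) : ℝ) + 1 / ((n (k+2) : ℝ) + 1 / (n (k+3) : ℝ)) with hzdef
    have hden : (0:ℝ) < (n (k+2) : ℝ) + 1 / (n (k+3) : ℝ) := by positivity
    have hxy : x ≤ y := by
      rw [hxdef, hydef]
      have : (0:ℝ) < 1 / ((n (k+2) : ℝ) + 1) := by positivity
      linarith
    have hyz : y ≤ z := by
      rw [hydef, hzdef]
      have hle : (n (k+2) : ℝ) + 1 / (n (k+3) : ℝ) ≤ (n (k+2) : ℝ) + 1 := by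
        have : 1 / (n (k+3) : ℝ) ≤ 1 := by
          rw [div_le_one (by linarith)]; exact hp3
        linarith
      have := one_div_le_one_div_of_le hden hle
      linarith
    have eL2 : L (k+2) = L (k+1) ++ [n (k+2)] := hLsplit (k+1)
    have eL3 : L (k+3) = L (k+2) ++ [n (k+3)] := hLsplit (k+2)
    -- identities
    have idb : gR (L (k+2)) 1 = gR (L k) y := by
      rw [eL2, gR_append, hLsplit k, gR_append]
      congr 1
      rw [hydef]
      norm_num
    have idc1 : c (k+1) = gR (L k) x := by
      show cfR (L (k+1)) = _
      rw [hLsplit k, cfR_append]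
    have idc3 : c (k+3) = gR (L k) z := by
      show cfR (L (k+3)) = _
      rw [eL3, cfR_append, eL2, gR_append, hLsplit k, gR_append]
    -- decompose L k = n 0 :: tail
    have hLk : L k = n 0 :: (List.range' 1 k).map n := by
      show (List.range (k+1)).map n = _
      rw [List.range_eq_range', List.range'_succ]
      simp
    have htail : ∀ j ∈ (List.range' 1 k).map n, 1 ≤ j := by
      intro j hj
      rcases List.mem_map.mp hj with ⟨i, hi, rfl⟩
      have := (List.mem_range'_1.mp hi).1
      exact hn i this
    have hbtw : Btww (gR (L k) x) (gR (L k) y) (gR (L k) z) := by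
      rw [hLk]
      have hmem := gR_btw ((List.range' 1 k).map n) htail hx1 hxy hyz
      have p1 : (0:ℝ) < gR ((List.range' 1 k).map n) x :=
        lt_of_lt_of_le one_pos (gR_ge_one _ htail _ hx1)
      have p2 : (0:ℝ) < gR ((List.range' 1 k).map n) y :=
        lt_of_lt_of_le one_pos (gR_ge_one _ htail _ (hx1.trans hxy))
      have p3 : (0:ℝ) < gR ((List.range' 1 k).map n) z :=
        lt_of_lt_of_le one_pos (gR_ge_one _ htail _ ((hx1.trans hxy).trans hyz))
      exact btw_step (n 0) p1 p2 p3 hmem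
    rw [idb, idc1, idc3]
    rcases hbtw with ⟨u1, u2⟩ | ⟨u1, u2⟩
    · exact ⟨le_trans (min_le_left _ _) u1, le_trans u2 (le_max_right _ _)⟩
    · exact ⟨le_trans (min_le_right _ _) u1, le_trans u2 (le_max_left _ _)⟩
  -- limits
  have hcm : Filter.Tendsto c Filter.atTop (nhds r) := hconv
  have hlo : Filter.Tendsto (fun m : ℕ => min (c (m - 1)) (c (m + 1))) Filter.atTop (nhds r) := by
    have t1 : Filter.Tendsto (fun m : ℕ => c (m - 1)) Filter.atTop (nhds r) :=
      hcm.comp (Filter.tendsto_sub_atTop_nat 1)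
    have t2 : Filter.Tendsto (fun m : ℕ => c (m + 1)) Filter.atTop (nhds r) :=
      hcm.comp (Filter.tendsto_add_atTop_nat 1)
    have := t1.min t2
    rwa [min_self] at this
  have hhi : Filter.Tendsto (fun m : ℕ => max (c (m - 1)) (c (m + 1))) Filter.atTop (nhds r) := by
    have t1 : Filter.Tendsto (fun m : ℕ => c (m - 1)) Filter.atTop (nhds r) :=
      hcm.comp (Filter.tendsto_sub_atTop_nat 1)
    have t2 : Filter.Tendsto (fun m : ℕ => c (m + 1)) Filter.atTop (nhds r) :=
      hcm.comp (Filter.tendsto_add_atTop_nat 1)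
    have := t1.max t2
    rwa [max_self] at this
  apply tendsto_of_tendsto_of_tendsto_of_le_of_le' hlo hhi
  · filter_upwards [Filter.eventually_ge_atTop 2] with m hm
    obtain ⟨k, rfl⟩ : ∃ k, m = k + 2 := ⟨m - 2, by omega⟩
    rw [hval (k+2)]
    have := (hbound k).1
    simpa using this
  · filter_upwards [Filter.eventually_ge_atTop 2] with m hm
    obtain ⟨k, rfl⟩ : ∃ k, m = k + 2 := ⟨m - 2, by omega⟩
    rw [hval (k+2)]
    have := (hbound k).2
    simpa using this
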